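/- arXiv:2004.02437 — 2 statements merged into one kernel-verified Lean document; each statement's English description precedes it below -/
import Mathlib

section
/- If a complete graph on an even vertex set has nonnegative edge weights and C is a Hamiltonian cycle, then the minimum-weight perfect matching has weight at most half the weight of C. -/
open scoped Classical

/-- Cyclic weight of a closed tour given by the vertex list `l`:
the sum of `ρ` over consecutive pairs, including the pair closing the cycle. -/
def cycWeight {V : Type*} (ρ : V → V → ℝ) (l : List V) : ℝ :=
  ((l.zip (l.rotate 1)).map fun p => ρ p.1 p.2).sum

/-- The (cyclic) list of edges of a closed tour given by the vertex list `l`. -/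
def cycEdges {V : Type*} (l : List V) : List (Sym2 V) :=
  (l.zip (l.rotate 1)).map Sym2.mk.uncurry

/-- The list of endpoints of a list of matching pairs. -/
def matchVerts {V : Type*} (M : List (V × V)) : List V :=
  M.flatMap fun p => [p.1, p.2]

/-- `M` is a perfect matching on the vertex set `X`: a partition of `X` into pairs. -/
def IsPM {V : Type*} [DecidableEq V] (X : Finset V) (M : List (V × V)) : Prop :=
  (matchVerts M).Nodup ∧ (matchVerts M).toFinset = X

/-- The weight of a matching: the sum of weights of its pairs. -/
def mWeight {V : Type*} (ρ : V → V → ℝ) (M : List (V × V)) : ℝ :=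
  (M.map fun p => ρ p.1 p.2).sum

/-- Total edge weight of a graph. -/
noncomputable def gWeight {V : Type*} [Fintype V] (f : Sym2 V → ℝ) (T : SimpleGraph V) : ℝ :=
  ∑ e ∈ T.edgeSet.toFinset, f e

/-- The weight of a walk in the graph `G` with edge weights `f`
(edges are counted with multiplicity). -/
def walkWeight {V : Type*} (G : SimpleGraph V) (f : Sym2 V → ℝ) {u v : V} (p : G.Walk u v) : ℝ :=
  (p.edges.map f).sum

/-- Shortest-path distance between `i` and `j` (metric closure of `G`). -/
noncomputable def sdist {V : Type*} (G : SimpleGraph V) (f : Sym2 V → ℝ) (i j : V) : ℝ :=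
  sInf {x | ∃ p : G.Walk i j, x = walkWeight G f p}

/-- pair up a list into consecutive pairs -/
def pairUp {V : Type*} : List V → List (V × V)
  | a :: b :: t => (a, b) :: pairUp t
  | _ => []

/-- path weight -/
def pw {V : Type*} (ρ : V → V → ℝ) : List V → ℝ
  | a :: b :: t => ρ a b + pw ρ (b :: t)
  | _ => 0

lemma matchVerts_pairUp {V : Type*} : ∀ (l : List V), Even l.length →
    matchVerts (pairUp l) = l
  | [], _ => rfl
  | [a], h => by simp at h
  | a :: b :: t, h => by
    have ht : Even t.length := by
      simpa [Nat.even_add_one, Nat.even_add] using h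
    simp only [pairUp, matchVerts, List.flatMap_cons]
    have := matchVerts_pairUp t ht
    simp only [matchVerts] at this
    simp [this]

lemma mWeight_nonneg {V : Type*} (ρ : V → V → ℝ) (hnn : ∀ i j, 0 ≤ ρ i j)
    (M : List (V × V)) : 0 ≤ mWeight ρ M := by
  apply List.sum_nonneg
  intro x hx
  simp only [List.mem_map] at hx
  obtain ⟨p, -, rfl⟩ := hx
  exact hnn _ _

lemma key {V : Type*} (ρ : V → V → ℝ) (z : V) : ∀ (l : List V), Even l.length →
    mWeight ρ (pairUp l) + mWeight ρ (pairUp (l.tail ++ [z])) = pw ρ (l ++ [z])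
  | [], _ => by simp [pairUp, pw, mWeight]
  | [a], h => by simp at h
  | [a, b], _ => by simp [pairUp, pw, mWeight]
  | a :: b :: c :: t, h => by
    have ht : Even (c :: t).length := by
      simp only [List.length_cons] at h ⊢
      obtain ⟨k, hk⟩ := h
      exact ⟨k - 1, by omega⟩
    have IH := key ρ z (c :: t) ht
    simp only [pairUp, mWeight, List.map_cons, List.sum_cons, List.tail_cons,
      List.cons_append, List.append_eq, pw] at IH ⊢
    ring_nf
    ring_nf at IH
    linarith

lemma cyc_eq_pw {V : Type*} (ρ : V → V → ℝ) (z : V) : ∀ (l : List V),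
    ((l.zip (l.tail ++ [z])).map fun p => ρ p.1 p.2).sum = pw ρ (l ++ [z])
  | [] => by simp [pw]
  | [a] => by simp [pw]
  | a :: b :: t => by
    have IH := cyc_eq_pw ρ z (b :: t)
    simp only [List.tail_cons, List.cons_append, List.zip_cons_cons, List.map_cons,
      List.sum_cons, pw] at IH ⊢
    rw [IH]

/-- In a complete graph on an even vertex set with nonnegative symmetric edge
weights, the minimum weight of a perfect matching is at most half the weight of
any Hamiltonian cycle `C`. -/
theorem min_matching_le_half_ham {V : Type*} [Fintype V] [DecidableEq V]
    (ρ : V → V → ℝ) (hnn : ∀ i j, 0 ≤ ρ i j) (hsym : ∀ i j, ρ i j = ρ j i)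
    (hcard : 3 ≤ Fintype.card V) (heven : Even (Fintype.card V))
    (C : List V) (hC : C.Nodup) (hCspan : C.toFinset = Finset.univ) :
    sInf {x | ∃ M : List (V × V), IsPM Finset.univ M ∧ x = mWeight ρ M}
      ≤ cycWeight ρ C / 2 := by
  have hlen : C.length = Fintype.card V := by
    rw [← List.toFinset_card_of_nodup hC, hCspan, Finset.card_univ]
  have hevenC : Even C.length := hlen ▸ heven
  obtain ⟨a, t, rfl⟩ : ∃ a t, C = a :: t := by
    cases C with
    | nil => simp at hlen; omega
    | cons a t => exact ⟨a, t, rfl⟩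
  set C := a :: t with hCdef
  have hrot : C.rotate 1 = t ++ [a] := by
    simp [hCdef, List.rotate_cons_succ]
  -- the two matchings
  set M1 := pairUp C with hM1
  set M2 := pairUp (C.rotate 1) with hM2
  have hmv1 : matchVerts M1 = C := matchVerts_pairUp C hevenC
  have hmv2 : matchVerts M2 = C.rotate 1 :=
    matchVerts_pairUp _ (by simpa using hevenC)
  have hperm : List.Perm (C.rotate 1) C := C.rotate_perm 1
  have hPM1 : IsPM Finset.univ M1 := ⟨hmv1 ▸ hC, by rw [hmv1, hCspan]⟩
  have hPM2 : IsPM Finset.univ M2 := by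
    constructor
    · rw [hmv2]; exact hperm.nodup_iff.mpr hC
    · rw [hmv2, List.toFinset_eq_of_perm _ _ hperm, hCspan]
  set S : Set ℝ := {x | ∃ M : List (V × V), IsPM Finset.univ M ∧ x = mWeight ρ M} with hS
  have hbdd : BddBelow S := by
    refine ⟨0, ?_⟩
    rintro x ⟨M, -, rfl⟩
    exact mWeight_nonneg ρ hnn M
  have h1 : sInf S ≤ mWeight ρ M1 := csInf_le hbdd ⟨M1, hPM1, rfl⟩
  have h2 : sInf S ≤ mWeight ρ M2 := csInf_le hbdd ⟨M2, hPM2, rfl⟩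
  have hsum : mWeight ρ M1 + mWeight ρ M2 = cycWeight ρ C := by
    have hk := key ρ a C hevenC
    have hc := cyc_eq_pw ρ a C
    rw [cycWeight, hrot]
    rw [hM1, hM2, hrot]
    have htail : C.tail = t := rfl
    rw [htail] at hk
    rw [show (C.tail ++ [a] : List V) = t ++ [a] from rfl] at hc
    rw [hk, ← hc]
  linarith
end

section
/- Given a closed walk through all vertices of a complete graph with weights satisfying the triangle inequality, there exists a Hamiltonian cycle of weight at most the weight of the walk (obtained by shortcutting repeated vertices). -/
open scoped Classical

/-- Path weight starting from `i` along a list. -/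
def pwAux {V : Type*} (ρ : V → V → ℝ) : V → List V → ℝ
  | _, [] => 0
  | i, j :: s => ρ i j + pwAux ρ j s

lemma pwAux_le {V : Type*} (ρ : V → V → ℝ) (hnn : ∀ i j, 0 ≤ ρ i j)
    (htri : ∀ i j k, ρ i j ≤ ρ i k + ρ k j) (i x : V) (s : List V) :
    pwAux ρ i s ≤ ρ i x + pwAux ρ x s := by
  cases s with
  | nil => simpa [pwAux] using hnn i x
  | cons y t =>
      simp only [pwAux]
      have := htri i y x
      linarith

lemma pwAux_mono {V : Type*} (ρ : V → V → ℝ) (hnn : ∀ i j, 0 ≤ ρ i j)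
    (htri : ∀ i j k, ρ i j ≤ ρ i k + ρ k j) {l m : List V} (h : l.Sublist m) :
    ∀ i, pwAux ρ i l ≤ pwAux ρ i m := by
  induction h with
  | slnil => intro i; simp
  | cons x h ih =>
      intro i
      calc pwAux ρ i _ ≤ pwAux ρ i _ := ih i
        _ ≤ ρ i x + pwAux ρ x _ := pwAux_le ρ hnn htri i x _
        _ = pwAux ρ i (x :: _) := rfl
  | cons_cons x h ih =>
      intro i
      simp only [pwAux]
      have := ih x
      linarith

lemma cycWeight_eq_pwAux {V : Type*} (ρ : V → V → ℝ) (a : V) (s : List V) :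
    cycWeight ρ (a :: s) = pwAux ρ a (s ++ [a]) := by
  have key : ∀ (s : List V) (i j : V),
      (((i :: s).zip (s ++ [j])).map fun p => ρ p.1 p.2).sum = pwAux ρ i (s ++ [j]) := by
    intro s
    induction s with
    | nil => intro i j; simp [pwAux]
    | cons b t ih =>
        intro i j
        simp only [List.cons_append, List.zip_cons_cons, List.map_cons, List.sum_cons, pwAux]
        rw [ih b j]
  rw [cycWeight]
  rw [show (a :: s).rotate 1 = s ++ [a] by
    simpa using List.rotate_cons_succ s a 0]
  exact key s a a

/-- Shortcutting: from a closed walk through all vertices one obtains a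
Hamiltonian cycle (a subsequence of the walk) of weight at most that of the walk. -/
theorem shortcut_walk_to_ham {V : Type*} [Fintype V] [DecidableEq V]
    (ρ : V → V → ℝ) (hnn : ∀ i j, 0 ≤ ρ i j) (hsym : ∀ i j, ρ i j = ρ j i)
    (htri : ∀ i j k, ρ i j ≤ ρ i k + ρ k j) (hV : 3 ≤ Fintype.card V)
    (w : List V) (hw : w ≠ []) (hwadj : ∀ p ∈ w.zip (w.rotate 1), p.1 ≠ p.2)
    (hwspan : w.toFinset = Finset.univ) :
    ∃ l : List V, l.Sublist w ∧ l.Nodup ∧ l.toFinset = Finset.univ ∧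
      cycWeight ρ l ≤ cycWeight ρ w := by
  obtain ⟨a, t, rfl⟩ : ∃ a t, w = a :: t := by
    cases w with
    | nil => exact absurd rfl hw
    | cons a t => exact ⟨a, t, rfl⟩
  refine ⟨a :: (t.filter (· ≠ a)).dedup, ?_, ?_, ?_, ?_⟩
  · exact ((List.dedup_sublist _).trans (List.filter_sublist (l := t))).cons₂ a
  · refine List.Nodup.cons ?_ (List.nodup_dedup _)
    intro ha
    have := List.of_mem_filter (List.mem_dedup.mp ha)
    simp at this
  · ext x
    have hx : x ∈ (a :: t).toFinset := by rw [hwspan]; exact Finset.mem_univ x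
    simp only [List.toFinset_cons, Finset.mem_insert, List.mem_toFinset] at hx ⊢
    simp only [List.mem_dedup, List.mem_filter]
    constructor
    · intro _; exact Finset.mem_univ x
    · intro _
      rcases hx with h | h
      · exact Or.inl h
      · by_cases hxa : x = a
        · exact Or.inl hxa
        · exact Or.inr ⟨h, by simp [hxa]⟩
  · rw [cycWeight_eq_pwAux, cycWeight_eq_pwAux]
    exact pwAux_mono ρ hnn htri
      (List.Sublist.append_right ((List.dedup_sublist _).trans (List.filter_sublist (l := t))) [a]) a
end
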